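/- Let V = { a = (a₁, a₂, …) : a_i ∈ ℂ, ∑_{i=1}^∞ |a_i|² < ∞ } with quadratic form f(a) = ∑_{i=1}^∞ a_i², and let A = Cl(V,f). Let I be a set whose cardinality equals the dimension of V over ℂ, let W = I →₀ ℂ with the quadratic form g(w) = ∑_{i ∈ I} (w i)², and let B = Cl(W,g). Then the Clifford algebras A and B are not isomorphic as ℂ-algebras (even though dim_ℂ A = dim_ℂ B and both are unital locally matrix algebras with Steinitz number 2^∞). -/

import Mathlib

/-
We prove that there is no ℂ-algebra homomorphism (in particular, no isomorphism) from the
Clifford algebra of the ℓ² quadratic form to the Clifford algebra of the "diagonal" form on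
`I →₀ ℂ`.  The key tool is the fermionic Fock representation `Psi` of `CliffordAlgebra g` on
`Finset I →₀ ℂ`, together with the "adjoint" symmetry relating `Psi x` and `Psi (reverse x)`.
Pairing the image of ℓ² against the images of the standard unit vectors `eₙ` through the
vacuum coefficient shows ℓ² would embed linearly into a countable-dimensional space of
finitely supported functions — contradicting the uncountable dimension of ℓ²
(witnessed by the geometric sequences, via Vandermonde determinants).
-/

noncomputable section Fock
variable {I : Type} [LinearOrder I]

/-- Toggle membership of `i` in `S`. -/
def tog (i : I) (S : Finset I) : Finset I :=
  if i ∈ S then S.erase i else insert i S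

lemma mem_tog {i j : I} {S : Finset I} :
    j ∈ tog i S ↔ (if j = i then i ∉ S else j ∈ S) := by
  unfold tog
  by_cases h : i ∈ S <;> by_cases hj : j = i <;>
    simp [h, hj, Finset.mem_erase, Finset.mem_insert]

lemma tog_tog (i : I) (S : Finset I) : tog i (tog i S) = S := by
  ext j
  by_cases hj : j = i <;> simp [mem_tog, hj]

lemma tog_comm {i j : I} (h : i ≠ j) (S : Finset I) :
    tog i (tog j S) = tog j (tog i S) := by
  ext k
  by_cases hk : k = i <;> by_cases hk' : k = j <;>
    simp [mem_tog, hk, hk', h, h.symm] <;> simp_all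

/-- The sign of the fermionic operator. -/
def sgn (i : I) (S : Finset I) : ℂ := (-1) ^ (S.filter (· < i)).card

lemma sgn_tog_of_not_lt {i j : I} (h : ¬ j < i) (S : Finset I) :
    sgn i (tog j S) = sgn i S := by
  unfold sgn
  congr 2
  ext k
  by_cases hk : k = j
  · simp only [Finset.mem_filter, mem_tog, hk, if_pos rfl]
    constructor
    · rintro ⟨-, hlt⟩; exact absurd hlt h
    · rintro ⟨hmem, hlt⟩; exact absurd hlt h
  · simp [Finset.mem_filter, mem_tog, hk]

lemma neg_one_pow_tog (j : I) (T : Finset I) :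
    ((-1 : ℂ)) ^ (tog j T).card = -((-1) ^ T.card) := by
  unfold tog
  by_cases h : j ∈ T
  · rw [if_pos h, Finset.card_erase_of_mem h]
    have h1 : 1 ≤ T.card := Finset.card_pos.2 ⟨j, h⟩
    have hT : T.card = (T.card - 1) + 1 := by omega
    conv_rhs => rw [hT, pow_succ]
    ring
  · rw [if_neg h, Finset.card_insert_of_notMem h, pow_succ]
    ring

lemma sgn_tog_of_lt {i j : I} (h : j < i) (S : Finset I) :
    sgn i (tog j S) = -sgn i S := by
  unfold sgn
  have hfil : (tog j S).filter (· < i) = tog j (S.filter (· < i)) := by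
    ext k
    by_cases hk : k = j <;> simp [Finset.mem_filter, mem_tog, hk, h] <;> tauto
  rw [hfil, neg_one_pow_tog]

lemma sgn_mul_self (i : I) (S : Finset I) : sgn i S * sgn i S = 1 := by
  unfold sgn
  rw [← pow_add]
  exact Even.neg_one_pow ⟨_, rfl⟩

/-- The fermionic operator `c_i` (creation + annihilation). -/
def fop (i : I) : (Finset I →₀ ℂ) →ₗ[ℂ] (Finset I →₀ ℂ) :=
  Finsupp.lsum ℂ fun S => sgn i S • Finsupp.lsingle (tog i S)

lemma fop_single (i : I) (S : Finset I) (x : ℂ) :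
    fop i (Finsupp.single S x) = sgn i S • Finsupp.single (tog i S) x := by
  simp [fop]

lemma fop_fop_same (i : I) : fop i ∘ₗ fop i = LinearMap.id := by
  refine Finsupp.lhom_ext fun S x => ?_
  simp only [LinearMap.comp_apply, fop_single, map_smul, LinearMap.id_apply,
    tog_tog, sgn_tog_of_not_lt (lt_irrefl i), smul_smul, sgn_mul_self, one_smul]

lemma fop_fop_ne {i j : I} (h : i ≠ j) : fop i ∘ₗ fop j = -(fop j ∘ₗ fop i) := by
  refine Finsupp.lhom_ext fun S x => ?_
  simp only [LinearMap.comp_apply, fop_single, map_smul, LinearMap.neg_apply, smul_smul]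
  rw [tog_comm h, ← neg_smul]
  congr 1
  rcases h.lt_or_gt with hlt | hlt
  · rw [sgn_tog_of_lt hlt S, sgn_tog_of_not_lt (asymm hlt) S]; ring
  · rw [sgn_tog_of_not_lt (asymm hlt) S, sgn_tog_of_lt hlt S]; ring

/-- The linear map sending `w` to `∑ wᵢ • c_i`. -/
def FF : (I →₀ ℂ) →ₗ[ℂ] Module.End ℂ (Finset I →₀ ℂ) :=
  Finsupp.lsum ℂ fun i => LinearMap.toSpanSingleton ℂ _ (fop i)

lemma FF_apply (w : I →₀ ℂ) : FF w = ∑ i ∈ w.support, w i • fop i := by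
  simp [FF, Finsupp.lsum_apply, Finsupp.sum, LinearMap.toSpanSingleton_apply]

lemma FF_sq (w : I →₀ ℂ) :
    FF w * FF w = algebraMap ℂ (Module.End ℂ (Finset I →₀ ℂ)) (∑ i ∈ w.support, (w i) ^ 2) := by
  have key : (2 : ℂ) • (FF w * FF w)
      = (2 : ℂ) • algebraMap ℂ (Module.End ℂ (Finset I →₀ ℂ)) (∑ i ∈ w.support, (w i) ^ 2) := by
    have expand : FF w * FF w
        = ∑ i ∈ w.support, ∑ j ∈ w.support, (w i * w j) • (fop i ∘ₗ fop j) := by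
      rw [FF_apply, Finset.sum_mul_sum]
      refine Finset.sum_congr rfl fun i _ => Finset.sum_congr rfl fun j _ => ?_
      rw [smul_mul_smul_comm]
      rfl
    have expand' : FF w * FF w
        = ∑ i ∈ w.support, ∑ j ∈ w.support, (w j * w i) • (fop j ∘ₗ fop i) := by
      rw [expand, Finset.sum_comm]
    calc (2 : ℂ) • (FF w * FF w)
        = ∑ i ∈ w.support, ∑ j ∈ w.support,
            ((w i * w j) • (fop i ∘ₗ fop j) + (w j * w i) • (fop j ∘ₗ fop i)) := by
          rw [two_smul]
          nth_rewrite 1 [expand]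
          nth_rewrite 1 [expand']
          rw [← Finset.sum_add_distrib]
          exact Finset.sum_congr rfl fun i _ => (Finset.sum_add_distrib).symm
      _ = ∑ i ∈ w.support, ∑ j ∈ w.support,
            (if i = j then ((2:ℂ) * (w i)^2) • (LinearMap.id (R := ℂ) (M := Finset I →₀ ℂ)) else 0) := by
          refine Finset.sum_congr rfl fun i _ => Finset.sum_congr rfl fun j _ => ?_
          by_cases h : i = j
          · subst h
            rw [if_pos rfl, fop_fop_same, ← add_smul]
            congr 1
            ring
          · rw [if_neg h, fop_fop_ne h]
            module
      _ = (2 : ℂ) • algebraMap ℂ (Module.End ℂ (Finset I →₀ ℂ)) (∑ i ∈ w.support, (w i) ^ 2) := by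
          rw [Algebra.algebraMap_eq_smul_one, Finset.sum_smul, Finset.smul_sum]
          refine Finset.sum_congr rfl fun i hi => ?_
          rw [Finset.sum_ite_eq w.support i _]
          rw [if_pos hi, smul_smul]
          rfl
  exact smul_right_injective _ (two_ne_zero) key

variable (g : QuadraticForm ℂ (I →₀ ℂ)) (hg : ∀ w : I →₀ ℂ, g w = ∑ i ∈ w.support, (w i) ^ 2)

/-- The Fock representation of the Clifford algebra. -/
def Psi : CliffordAlgebra g →ₐ[ℂ] Module.End ℂ (Finset I →₀ ℂ) :=
  CliffordAlgebra.lift g ⟨FF, fun w => by rw [hg w]; exact FF_sq w⟩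

lemma Psi_ι (w : I →₀ ℂ) : Psi g hg (CliffordAlgebra.ι g w) = FF w :=
  CliffordAlgebra.lift_ι_apply _ _ _

lemma apply_coeff (L : (Finset I →₀ ℂ) →ₗ[ℂ] (Finset I →₀ ℂ)) (ξ : Finset I →₀ ℂ) (T : Finset I)
    (s : Finset (Finset I)) (hs : ξ.support ⊆ s) :
    (L ξ) T = ∑ U ∈ s, ξ U * (L (Finsupp.single U 1)) T := by
  have hξ : ξ = ∑ U ∈ s, (ξ U) • Finsupp.single U (1 : ℂ) := by
    ext V
    rw [Finset.sum_apply']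
    have hterm : ∀ U, ((ξ U) • Finsupp.single U (1 : ℂ)) V = if U = V then ξ U else 0 := fun U => by
      rw [Finsupp.smul_apply, Finsupp.single_apply, smul_eq_mul]
      split <;> simp
    rw [Finset.sum_congr rfl fun U _ => hterm U, Finset.sum_ite_eq' s V]
    by_cases hV : V ∈ s
    · rw [if_pos hV]
    · rw [if_neg hV]
      exact Finsupp.notMem_support_iff.1 (fun hc => hV (hs hc))
  conv_lhs => rw [hξ, map_sum]
  rw [Finset.sum_apply']
  refine Finset.sum_congr rfl fun U _ => ?_
  rw [map_smul, Finsupp.smul_apply, smul_eq_mul]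

lemma adj (x : CliffordAlgebra g) (S T : Finset I) :
    (Psi g hg x (Finsupp.single S 1)) T
      = (Psi g hg (CliffordAlgebra.reverse x) (Finsupp.single T 1)) S := by
  induction x using CliffordAlgebra.induction generalizing S T with
  | algebraMap r =>
    rw [CliffordAlgebra.reverse.commutes]
    simp only [AlgHom.commutes, Module.algebraMap_end_apply, Finsupp.smul_apply, smul_eq_mul,
      Finsupp.single_apply]
    by_cases h : S = T
    · subst h; rfl
    · rw [if_neg h, if_neg (Ne.symm h)]
  | ι w =>
    rw [CliffordAlgebra.reverse_ι, Psi_ι, FF_apply]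
    simp only [LinearMap.coe_sum, Finset.sum_apply, LinearMap.smul_apply, fop_single,
      Finsupp.smul_apply, Finset.sum_apply']
    refine Finset.sum_congr rfl fun i _ => ?_
    simp only [Finsupp.smul_apply, Finsupp.single_apply, smul_eq_mul]
    by_cases h : tog i S = T
    · have h2 : tog i T = S := by rw [← h, tog_tog]
      have h3 : sgn i T = sgn i S := by rw [← h, sgn_tog_of_not_lt (lt_irrefl i)]
      rw [if_pos h, if_pos h2, h3]
    · have h2 : ¬ tog i T = S := fun h' => h (by rw [← h', tog_tog])
      rw [if_neg h, if_neg h2]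
      ring
  | mul x y hx hy =>
    rw [CliffordAlgebra.reverse.map_mul, map_mul, map_mul, Module.End.mul_apply,
      Module.End.mul_apply]
    set s := (Psi g hg y (Finsupp.single S 1)).support ∪
      (Psi g hg (CliffordAlgebra.reverse x) (Finsupp.single T 1)).support with hs
    rw [apply_coeff _ _ _ s Finset.subset_union_left,
      apply_coeff _ _ _ s Finset.subset_union_right]
    refine Finset.sum_congr rfl fun U _ => ?_
    rw [hy S U, hx U T]
    ring
  | add x y hx hy =>
    simp only [map_add, LinearMap.add_apply, Finsupp.add_apply, hx, hy]

end Fock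

noncomputable section lpSide
open ENNReal Matrix

abbrev V2 := lp (fun _ : ℕ => ℂ) 2

lemma sq_summable (a : V2) : Summable fun i => (a i) ^ 2 := by
  have h := lp.memℓp a
  rw [memℓp_gen_iff (p := 2) (by norm_num)] at h
  refine Summable.of_norm ?_
  have heq : ∀ i : ℕ, ‖(a i) ^ 2‖ = ‖a i‖ ^ ((2 : ℝ≥0∞)).toReal := by
    intro i
    rw [norm_pow]
    norm_num
  simpa only [heq] using h

def e2 (n : ℕ) : V2 := lp.single 2 n 1

lemma e2_self (n : ℕ) : e2 n n = 1 := lp.single_apply_self _ _ _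

lemma e2_ne {n i : ℕ} (h : i ≠ n) : e2 n i = 0 := lp.single_apply_ne _ _ _ h

lemma polar_eq (Q : QuadraticForm ℂ V2) (hQ : ∀ a : V2, Q a = ∑' i, (a i) ^ 2)
    (a : V2) (n : ℕ) :
    QuadraticMap.polar Q a (e2 n) = 2 * a n := by
  have hcoord : ∀ i, (a + e2 n) i = a i + e2 n i := by
    intro i
    rw [lp.coeFn_add]
    rfl
  have hsq : ∀ i, ((a + e2 n) i) ^ 2 = (a i) ^ 2 + (if i = n then 2 * a n + 1 else 0) := by
    intro i
    rw [hcoord i]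
    by_cases h : i = n
    · subst h
      rw [if_pos rfl, e2_self]
      ring
    · rw [if_neg h, e2_ne h]
      ring
  have h1 : Q (a + e2 n) = (∑' i, (a i) ^ 2) + (2 * a n + 1) := by
    rw [hQ]
    calc ∑' i, ((a + e2 n) i) ^ 2
        = ∑' i, ((a i) ^ 2 + (if i = n then 2 * a n + 1 else 0)) := tsum_congr hsq
      _ = (∑' i, (a i) ^ 2) + ∑' i, (if i = n then 2 * a n + 1 else 0) := by
          refine Summable.tsum_add (sq_summable a) ?_
          exact summable_of_ne_finset_zero (s := {n}) fun i hi => by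
            rw [if_neg (by simpa using hi)]
      _ = (∑' i, (a i) ^ 2) + (2 * a n + 1) := by rw [tsum_ite_eq]
  have hes : ∀ i, (e2 n i) ^ 2 = if i = n then (1:ℂ) else 0 := by
    intro i
    by_cases h : i = n
    · subst h; rw [e2_self, if_pos rfl, one_pow]
    · rw [e2_ne h, if_neg h]
      ring
  have h2 : Q (e2 n) = 1 := by
    rw [hQ, tsum_congr hes, tsum_ite_eq]
  rw [QuadraticMap.polar, h1, hQ, h2]
  ring

/-- Geometric sequences in ℓ². -/
def geomSeq (t : Set.Ioo (0:ℝ) (1/2)) : V2 :=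
  ⟨fun n => (((t : ℝ) : ℂ)) ^ n, by
    apply memℓp_gen
    have h0 : (0:ℝ) ≤ (t:ℝ) := le_of_lt t.2.1
    have h1 : (t:ℝ) < 1 := lt_trans t.2.2 (by norm_num)
    have heq : ∀ n : ℕ, ‖(((t : ℝ) : ℂ)) ^ n‖ ^ ((2 : ℝ≥0∞)).toReal = ((t:ℝ)^2) ^ n := by
      intro n
      rw [norm_pow, Complex.norm_real, Real.norm_of_nonneg h0]
      rw [ENNReal.toReal_ofNat]
      rw [show ((t:ℝ)^n) ^ (2:ℝ) = ((t:ℝ)^n) ^ (2:ℕ) by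
        rw [← Real.rpow_natCast ((t:ℝ)^n) 2]; norm_num]
      ring
    rw [funext heq]
    exact summable_geometric_of_lt_one (by positivity) (by nlinarith)⟩

lemma geomSeq_apply (t : Set.Ioo (0:ℝ) (1/2)) (n : ℕ) :
    geomSeq t n = (((t : ℝ) : ℂ)) ^ n := rfl

lemma geom_li : LinearIndependent ℂ geomSeq := by
  rw [linearIndependent_iff']
  intro s gc hsum t ht
  have hcoord : ∀ n : ℕ, ∑ u ∈ s, gc u * (((u : ℝ) : ℂ)) ^ n = 0 := by
    intro n
    have h := congrArg (fun z : V2 => z n) hsum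
    simp only [lp.coeFn_sum, Finset.sum_apply, lp.coeFn_smul, Pi.smul_apply, smul_eq_mul,
      lp.coeFn_zero, Pi.zero_apply, geomSeq_apply] at h
    exact h
  set eqv := s.equivFin with heqv
  set φ : Fin s.card → ℂ := fun j => (((eqv.symm j : Set.Ioo (0:ℝ) (1/2)) : ℝ) : ℂ) with hφ
  have φinj : Function.Injective φ := by
    intro i j hij
    simp only [hφ] at hij
    exact eqv.symm.injective (Subtype.ext (Subtype.ext (Complex.ofReal_inj.1 hij)))
  have hdet : (Matrix.vandermonde φ).det ≠ 0 := by
    intro h0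
    obtain ⟨i, j, hij, hne⟩ := (Matrix.det_vandermonde_eq_zero_iff).1 h0
    exact hne (φinj hij)
  have hmul : (Matrix.vandermonde φ)ᵀ.mulVec (fun j => gc (eqv.symm j)) = 0 := by
    funext n
    simp only [Matrix.mulVec, Matrix.transpose_apply, Matrix.vandermonde, dotProduct,
      Matrix.of_apply, Pi.zero_apply]
    calc ∑ j, φ j ^ (n : ℕ) * gc (eqv.symm j)
        = ∑ j, gc (eqv.symm j) * (((eqv.symm j : Set.Ioo (0:ℝ) (1/2)) : ℝ) : ℂ) ^ (n : ℕ) := by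
          refine Finset.sum_congr rfl fun j _ => ?_
          rw [hφ]
          ring
      _ = ∑ u : {x // x ∈ s}, gc u * (((u : Set.Ioo (0:ℝ) (1/2)) : ℝ) : ℂ) ^ (n : ℕ) :=
          Equiv.sum_comp eqv.symm
            (fun u => gc u * (((u : Set.Ioo (0:ℝ) (1/2)) : ℝ) : ℂ) ^ (n : ℕ))
      _ = ∑ u ∈ s, gc u * (((u : ℝ) : ℂ)) ^ (n : ℕ) :=
          Finset.sum_coe_sort s (fun u => gc u * (((u : ℝ) : ℂ)) ^ (n : ℕ))
      _ = 0 := hcoord n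
  have hw : (fun j => gc (eqv.symm j)) = 0 :=
    Matrix.eq_zero_of_mulVec_eq_zero (by rwa [Matrix.det_transpose]) hmul
  have hfin := congrFun hw (eqv ⟨t, ht⟩)
  simpa using hfin

lemma aleph0_lt_rank_V2 : Cardinal.aleph0 < Module.rank ℂ V2 := by
  have hcard := geom_li.cardinal_le_rank
  have hmk : Cardinal.mk (Set.Ioo (0:ℝ) (1/2)) = Cardinal.continuum :=
    Cardinal.mk_Ioo_real (by norm_num)
  calc Cardinal.aleph0 < Cardinal.continuum := Cardinal.aleph0_lt_continuum
    _ ≤ Module.rank ℂ V2 := by rw [← hmk]; exact hcard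

end lpSide

theorem stmt_19 (I : Type)
    (hI : Cardinal.mk I = Module.rank ℂ (lp (fun _ : ℕ => ℂ) 2))
    (Q : QuadraticForm ℂ (lp (fun _ : ℕ => ℂ) 2))
    (hQ : ∀ a : lp (fun _ : ℕ => ℂ) 2, Q a = ∑' i, (a i) ^ 2)
    (g : QuadraticForm ℂ (I →₀ ℂ))
    (hg : ∀ w : I →₀ ℂ, g w = ∑ i ∈ w.support, (w i) ^ 2) :
    IsEmpty (CliffordAlgebra Q ≃ₐ[ℂ] CliffordAlgebra g) := by
  constructor
  intro e
  letI : LinearOrder I := IsWellOrder.linearOrder WellOrderingRel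
  classical
  -- the image of ℓ² inside `CliffordAlgebra g`
  let x : V2 →ₗ[ℂ] CliffordAlgebra g :=
    (e.toAlgHom.toLinearMap).comp (CliffordAlgebra.ι Q)
  let vac : Finset I →₀ ℂ := Finsupp.single ∅ 1
  let ρ : CliffordAlgebra g → (Finset I →₀ ℂ) := fun b => Psi g hg b vac
  let rev : CliffordAlgebra g → CliffordAlgebra g := CliffordAlgebra.reverse
  let u : ℕ → CliffordAlgebra g := fun n => x (e2 n)
  -- the countable set of relevant coordinates
  let 𝒮 : Set (Finset I) :=
    (⋃ n, ((ρ (u n)).support : Set (Finset I))) ∪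
      (⋃ n, ((ρ (rev (u n))).support : Set (Finset I)))
  have hScount : 𝒮.Countable :=
    ((Set.countable_iUnion fun n => (Finset.countable_toSet _)).union
      (Set.countable_iUnion fun n => Finset.countable_toSet _))
  -- the coordinate-restriction linear map
  let ρlin : CliffordAlgebra g →ₗ[ℂ] (Finset I →₀ ℂ) :=
    { toFun := ρ
      map_add' := fun p q => by simp only [ρ, map_add, LinearMap.add_apply]
      map_smul' := fun c p => by simp only [ρ, map_smul, LinearMap.smul_apply, RingHom.id_apply] }
  let revlin : CliffordAlgebra g →ₗ[ℂ] CliffordAlgebra g := CliffordAlgebra.reverse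
  let κ : V2 →ₗ[ℂ] ((𝒮 →₀ ℂ) × (𝒮 →₀ ℂ)) :=
    LinearMap.prod
      ((Finsupp.lsubtypeDomain 𝒮).comp (ρlin.comp x))
      ((Finsupp.lsubtypeDomain 𝒮).comp (ρlin.comp (revlin.comp x)))
  have hker : ∀ a : V2, κ a = 0 → a = 0 := by
    intro a ha
    have ha1 : ∀ U ∈ 𝒮, (ρ (x a)) U = 0 := by
      intro U hU
      have h1 := congrArg Prod.fst ha
      have h2 := congrArg (fun z : 𝒮 →₀ ℂ => z ⟨U, hU⟩) h1
      simpa [κ, Finsupp.lsubtypeDomain, Finsupp.subtypeDomain_apply, ρlin] using h2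
    have ha2 : ∀ U ∈ 𝒮, (ρ (rev (x a))) U = 0 := by
      intro U hU
      have h1 := congrArg Prod.snd ha
      have h2 := congrArg (fun z : 𝒮 →₀ ℂ => z ⟨U, hU⟩) h1
      simpa [κ, Finsupp.lsubtypeDomain, Finsupp.subtypeDomain_apply, ρlin, revlin] using h2
    have key : ∀ n : ℕ, (2 : ℂ) * a n = 0 := by
      intro n
      -- the Clifford relation in `CliffordAlgebra Q`
      have hA : CliffordAlgebra.ι Q a * CliffordAlgebra.ι Q (e2 n)
            + CliffordAlgebra.ι Q (e2 n) * CliffordAlgebra.ι Q a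
          = algebraMap ℂ (CliffordAlgebra Q) (2 * a n) := by
        rw [CliffordAlgebra.ι_mul_ι_add_swap, polar_eq Q hQ a n]
      -- push it through `e`
      have hB : x a * u n + u n * x a = algebraMap ℂ (CliffordAlgebra g) (2 * a n) := by
        have h := congrArg e hA
        rw [map_add, map_mul, map_mul, AlgEquiv.commutes] at h
        exact h
      -- apply `Psi`, evaluate at the vacuum, take the `∅` coefficient
      have hPsi := congrArg (fun z : CliffordAlgebra g => (Psi g hg z vac) ∅) hB
      simp only [map_add, map_mul, LinearMap.add_apply, Module.End.mul_apply, Finsupp.add_apply,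
        AlgHom.commutes, Module.algebraMap_end_apply, Finsupp.smul_apply, smul_eq_mul] at hPsi
      -- right-hand side is `2 * a n`
      have hvac : vac ∅ = 1 := Finsupp.single_eq_same
      rw [hvac, mul_one] at hPsi
      -- first term vanishes
      have hterm1 : (Psi g hg (x a) (Psi g hg (u n) vac)) ∅ = 0 := by
        rw [apply_coeff (Psi g hg (x a)) (Psi g hg (u n) vac) ∅
          (Psi g hg (u n) vac).support (le_refl _)]
        refine Finset.sum_eq_zero fun U hU => ?_
        have hadj := adj g hg (x a) U ∅
        have hU𝒮 : U ∈ 𝒮 := Set.mem_union_left _ (Set.mem_iUnion.2 ⟨n, hU⟩)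
        have : (Psi g hg (x a) (Finsupp.single U 1)) ∅ = 0 := by
          rw [hadj]
          exact ha2 U hU𝒮
        rw [this, mul_zero]
      -- second term vanishes
      have hterm2 : (Psi g hg (u n) (Psi g hg (x a) vac)) ∅ = 0 := by
        rw [apply_coeff (Psi g hg (u n)) (Psi g hg (x a) vac) ∅
          (Psi g hg (x a) vac).support (le_refl _)]
        refine Finset.sum_eq_zero fun U hU => ?_
        have hadj := adj g hg (u n) U ∅
        by_cases hU𝒮 : U ∈ 𝒮
        · rw [ha1 U hU𝒮, zero_mul]
        · have hU2 : U ∉ (ρ (rev (u n))).support :=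
            fun hc => hU𝒮 (Set.mem_union_right _ (Set.mem_iUnion.2 ⟨n, hc⟩))
          have : (Psi g hg (u n) (Finsupp.single U 1)) ∅ = 0 := by
            rw [hadj]
            exact Finsupp.notMem_support_iff.1 hU2
          rw [this, mul_zero]
      rw [hterm1, hterm2, add_zero] at hPsi
      exact hPsi.symm
    have hcoords : ∀ n : ℕ, a n = 0 := by
      intro n
      have h := key n
      rcases mul_eq_zero.1 h with h2 | h2
      · exact absurd h2 two_ne_zero
      · exact h2
    apply lp.ext
    funext n
    rw [lp.coeFn_zero, Pi.zero_apply]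
    exact hcoords n
  have hinj : Function.Injective κ :=
    LinearMap.ker_eq_bot.1 (LinearMap.ker_eq_bot'.2 hker)
  have hrank := LinearMap.rank_le_of_injective κ hinj
  have htarget : Module.rank ℂ ((𝒮 →₀ ℂ) × (𝒮 →₀ ℂ)) ≤ Cardinal.aleph0 := by
    rw [rank_prod', rank_finsupp_self']
    have hle : Cardinal.mk 𝒮 ≤ Cardinal.aleph0 := hScount.le_aleph0
    calc Cardinal.mk 𝒮 + Cardinal.mk 𝒮 ≤ Cardinal.aleph0 + Cardinal.aleph0 :=
          add_le_add hle hle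
      _ = Cardinal.aleph0 := Cardinal.aleph0_add_aleph0
  exact absurd (hrank.trans htarget) (not_le.2 aleph0_lt_rank_V2)
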